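/- Let (X, ‖·‖) be a real Banach space and let T : X → X be an enriched 𝒜-contraction. Then the fixed point problem for T has the limit shadowing property: for every sequence (u_n) in X with ‖u_n − T u_n‖ → 0 as n → ∞, there exists p ∈ X such that ‖Tⁿp − u_n‖ → 0 as n → ∞. -/

import Mathlib

/-- Membership in the class `𝒜` of Akram-type comparison functions. -/
def MemA (f : ℝ × ℝ × ℝ → ℝ) : Prop :=
  ContinuousOn f {p : ℝ × ℝ × ℝ | 0 ≤ p.1 ∧ 0 ≤ p.2.1 ∧ 0 ≤ p.2.2} ∧
  (∃ k : ℝ, 0 ≤ k ∧ k < 1 ∧ ∀ r s : ℝ, 0 ≤ r → 0 ≤ s →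
    (r ≤ f (s, r, s) ∨ r ≤ f (r, s, s)) → r ≤ k * s) ∧
  (∀ lam : ℝ, 0 < lam → ∀ r s t : ℝ, 0 ≤ r → 0 ≤ s → 0 ≤ t →
    lam * f (r, s, t) ≤ f (lam * r, lam * s, lam * t))

/-- The fixed point problem of an enriched `𝒜`-contraction on a real Banach space
has the limit shadowing property. -/
theorem enriched_A_contraction_limitShadowing
    {X : Type*} [NormedAddCommGroup X] [NormedSpace ℝ X] [CompleteSpace X]
    (T : X → X) (f : ℝ × ℝ × ℝ → ℝ) (hf : MemA f) (b : ℝ) (hb : 0 ≤ b)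
    (hT : ∀ u v : X, u ≠ v →
      ‖b • (u - v) + T u - T v‖ ≤ f ((b + 1) * ‖u - v‖, ‖u - T u‖, ‖v - T v‖)) :
    ∀ u : ℕ → X,
      Filter.Tendsto (fun n => ‖u n - T (u n)‖) Filter.atTop (nhds 0) →
      ∃ p : X, Filter.Tendsto (fun n => ‖T^[n] p - u n‖) Filter.atTop (nhds 0) := by
  obtain ⟨hf1, ⟨k, hk0, hk1, hk2⟩, hf3⟩ := hf
  intro u hu
  set A : Set (ℝ × ℝ × ℝ) := {p : ℝ × ℝ × ℝ | 0 ≤ p.1 ∧ 0 ≤ p.2.1 ∧ 0 ≤ p.2.2} with hA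
  have hc : (0:ℝ) < b + 1 := by linarith
  set S : X → X := fun w => w + (b+1)⁻¹ • (T w - w) with hSdef
  have hsub : ∀ w, w - S w = (b+1)⁻¹ • (w - T w) := by
    intro w; simp only [hSdef]
    match_scalars <;> field_simp <;> ring
  have hnormsub : ∀ w, ‖w - S w‖ = (b+1)⁻¹ * ‖w - T w‖ := by
    intro w
    rw [hsub w, norm_smul, Real.norm_eq_abs, abs_of_pos (by positivity)]
  have hdiff : ∀ w v, S w - S v = (b+1)⁻¹ • (b • (w - v) + T w - T v) := by
    intro w v; simp only [hSdef]
    match_scalars <;> field_simp <;> ring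
  have hfix : ∀ p : X, S p = p → T p = p := by
    intro p hp
    have h0 : p - S p = 0 := by rw [hp, sub_self]
    rw [hsub] at h0
    have h1 : p - T p = 0 := by
      rcases smul_eq_zero.mp h0 with h | h
      · exact absurd h (by positivity)
      · exact h
    have := sub_eq_zero.mp h1
    exact this.symm
  have hK : ∀ w v : X, w ≠ v → ‖S w - S v‖ ≤ f (‖w - v‖, ‖w - S w‖, ‖v - S v‖) := by
    intro w v hwv
    rw [hdiff, norm_smul, Real.norm_eq_abs, abs_of_pos (by positivity)]
    calc (b+1)⁻¹ * ‖b • (w - v) + T w - T v‖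
        ≤ (b+1)⁻¹ * f ((b+1) * ‖w - v‖, ‖w - T w‖, ‖v - T v‖) :=
          mul_le_mul_of_nonneg_left (hT w v hwv) (by positivity)
      _ ≤ f (‖w - v‖, ‖w - S w‖, ‖v - S v‖) := by
          have h3 := hf3 ((b+1)⁻¹) (by positivity) ((b+1) * ‖w - v‖) ‖w - T w‖ ‖v - T v‖
            (by positivity) (norm_nonneg _) (norm_nonneg _)
          have e1 : (b+1)⁻¹ * ((b+1) * ‖w - v‖) = ‖w - v‖ := by field_simp
          have e2 : (b+1)⁻¹ * ‖w - T w‖ = ‖w - S w‖ := (hnormsub w).symm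
          have e3 : (b+1)⁻¹ * ‖v - T v‖ = ‖v - S v‖ := (hnormsub v).symm
          rw [e1, e2, e3] at h3
          exact h3
  -- Existence of a fixed point of S via Picard iteration.
  obtain ⟨p, hSp⟩ : ∃ p : X, S p = p := by
    set x : ℕ → X := fun n => S^[n] 0 with hx
    have hxsucc : ∀ n, x (n+1) = S (x n) := by
      intro n; simp only [hx, Function.iterate_succ_apply']
    set D : ℕ → ℝ := fun n => ‖x (n+1) - x n‖ with hD
    have hDstep : ∀ n, D (n+1) ≤ k * D n := by
      intro n
      by_cases h : x (n+1) = x n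
      · have hx2 : x (n+1+1) = x (n+1) := by
          calc x (n+1+1) = S (x (n+1)) := hxsucc _
            _ = S (x n) := by rw [h]
            _ = x (n+1) := (hxsucc n).symm
        have h0 : D (n+1) = 0 := by
          show ‖x (n+1+1) - x (n+1)‖ = 0
          rw [hx2, sub_self, norm_zero]
        rw [h0]; positivity
      · have h1 : D (n+1) ≤ f (D n, D (n+1), D n) := by
          have h2 := hK (x (n+1)) (x n) h
          rw [← hxsucc n, ← hxsucc (n+1), norm_sub_rev (x (n+1)) (x (n+1+1)),
            norm_sub_rev (x n) (x (n+1))] at h2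
          exact h2
        exact hk2 (D (n+1)) (D n) (norm_nonneg _) (norm_nonneg _) (Or.inl h1)
    have hDgeo : ∀ n m, D (n + m) ≤ k ^ m * D n := by
      intro n m
      induction m with
      | zero => simp
      | succ m ih =>
        calc D (n + m + 1) ≤ k * D (n + m) := hDstep (n + m)
          _ ≤ k * (k ^ m * D n) := by
              exact mul_le_mul_of_nonneg_left ih hk0
          _ = k ^ (m+1) * D n := by ring
    have hDgeo0 : ∀ n, D n ≤ D 0 * k ^ n := by
      intro n
      have := hDgeo 0 n
      simpa [mul_comm] using this
    have hcauchy : CauchySeq x := by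
      apply cauchySeq_of_le_geometric k (D 0) hk1
      intro n
      rw [dist_eq_norm, norm_sub_rev]
      exact hDgeo0 n
    obtain ⟨p, hp⟩ := cauchySeq_tendsto_of_complete hcauchy
    have hD0 : Filter.Tendsto D Filter.atTop (nhds 0) := by
      apply squeeze_zero (fun n => norm_nonneg _) hDgeo0
      have := tendsto_pow_atTop_nhds_zero_of_lt_one hk0 hk1
      simpa using this.const_mul (D 0)
    by_cases hB : ∃ N, x (N+1) = x N
    · -- eventually constant
      obtain ⟨N, hN⟩ := hB
      have hconst : ∀ m, x (N + m) = x N := by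
        intro m
        induction m with
        | zero => simp
        | succ m ih =>
          show x (N + m + 1) = x N
          rw [hxsucc (N + m), ih, ← hxsucc N, hN]
      have hpN : p = x N := by
        have h2 : Filter.Tendsto x Filter.atTop (nhds (x N)) := by
          refine Filter.Tendsto.congr' ?_ tendsto_const_nhds
          filter_upwards [Filter.eventually_ge_atTop N] with m hm
          have := hconst (m - N)
          rw [Nat.add_sub_cancel' hm] at this
          exact this.symm
        exact tendsto_nhds_unique hp h2
      exact ⟨p, by rw [hpN, ← hxsucc N, hN]⟩
    · push_neg at hB
      have hDpos : ∀ n, 0 < D n := by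
        intro n
        have : x (n+1) - x n ≠ 0 := sub_ne_zero.mpr (hB n)
        exact norm_pos_iff.mpr this
      have hne : ∀ᶠ n in Filter.atTop, x n ≠ p := by
        by_cases hex : ∃ n, x n = p
        · obtain ⟨n₀, hn₀⟩ := hex
          filter_upwards [Filter.eventually_gt_atTop n₀] with m hm hxm
          have h1 : D m ≤ k ^ (m - n₀) * D n₀ := by
            have := hDgeo n₀ (m - n₀)
            rwa [Nat.add_sub_cancel' hm.le] at this
          have hDm : D m = D n₀ := by
            simp only [hD, hxsucc m, hxsucc n₀, hxm, hn₀]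
          have hkpow : k ^ (m - n₀) ≤ k := by
            have : k ^ (m - n₀) ≤ k ^ 1 := pow_le_pow_of_le_one hk0 hk1.le (by omega)
            simpa using this
          have : D m < D n₀ := by
            calc D m ≤ k ^ (m - n₀) * D n₀ := h1
              _ ≤ k * D n₀ := mul_le_mul_of_nonneg_right hkpow (hDpos n₀).le
              _ < 1 * D n₀ := by
                  exact mul_lt_mul_of_pos_right hk1 (hDpos n₀)
              _ = D n₀ := one_mul _
          linarith [hDm ▸ this]
        · push_neg at hex
          filter_upwards with n; exact hex n
      set r : ℝ := ‖p - S p‖ with hr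
      have hxnorm : Filter.Tendsto (fun n => ‖p - x n‖) Filter.atTop (nhds 0) := by
        have := tendsto_iff_norm_sub_tendsto_zero.mp hp
        apply this.congr
        intro n; exact norm_sub_rev _ _
      have hxnorm' : Filter.Tendsto (fun n => ‖p - x (n+1)‖) Filter.atTop (nhds 0) :=
        hxnorm.comp (Filter.tendsto_add_atTop_nat 1)
      have hmem : ((0:ℝ), r, (0:ℝ)) ∈ A := ⟨le_refl 0, norm_nonneg _, le_refl 0⟩
      have hcw : Filter.Tendsto f (nhdsWithin ((0:ℝ), r, (0:ℝ)) A) (nhds (f (0, r, 0))) :=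
        hf1 _ hmem
      have htup : Filter.Tendsto (fun n => ((‖p - x n‖, r, D n) : ℝ × ℝ × ℝ))
          Filter.atTop (nhdsWithin ((0:ℝ), r, (0:ℝ)) A) := by
        rw [tendsto_nhdsWithin_iff]
        constructor
        · exact hxnorm.prodMk_nhds (tendsto_const_nhds.prodMk_nhds hD0)
        · filter_upwards with n
          exact ⟨norm_nonneg _, norm_nonneg _, norm_nonneg _⟩
      have hfn : Filter.Tendsto (fun n => ‖p - x (n+1)‖ + f (‖p - x n‖, r, D n))
          Filter.atTop (nhds (0 + f (0, r, 0))) :=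
        hxnorm'.add (hcw.comp htup)
      have hrle : r ≤ 0 + f (0, r, 0) := by
        apply ge_of_tendsto hfn
        filter_upwards [hne] with n hn
        have h1 : ‖S p - S (x n)‖ ≤ f (‖p - x n‖, r, D n) := by
          have := hK p (x n) (fun h => hn h.symm)
          have e : ‖x n - S (x n)‖ = D n := by
            rw [← hxsucc n, norm_sub_rev]
          rwa [e] at this
        calc r = ‖p - S p‖ := rfl
          _ ≤ ‖p - x (n+1)‖ + ‖x (n+1) - S p‖ := norm_sub_le_norm_sub_add_norm_sub _ _ _
          _ = ‖p - x (n+1)‖ + ‖S p - S (x n)‖ := by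
              rw [hxsucc n, norm_sub_rev (S (x n)) (S p)]
          _ ≤ ‖p - x (n+1)‖ + f (‖p - x n‖, r, D n) := by linarith
      rw [zero_add] at hrle
      have hr0 : r ≤ k * 0 := hk2 r 0 (norm_nonneg _) le_rfl (Or.inl hrle)
      have : r = 0 := le_antisymm (by simpa using hr0) (norm_nonneg _)
      have : p - S p = 0 := norm_eq_zero.mp this
      exact ⟨p, (sub_eq_zero.mp this).symm⟩
  -- p is a fixed point of T
  have hTp : T p = p := hfix p hSp
  have hiter : ∀ n, T^[n] p = p := fun n => Function.iterate_fixed hTp n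
  refine ⟨p, ?_⟩
  set ε : ℕ → ℝ := fun n => ‖u n - S (u n)‖ with hε
  have hεt : Filter.Tendsto ε Filter.atTop (nhds 0) := by
    have : ε = fun n => (b+1)⁻¹ * ‖u n - T (u n)‖ := by
      funext n; exact hnormsub (u n)
    rw [this]
    simpa using hu.const_mul ((b+1)⁻¹)
  -- f (1,0,0) < 1
  have hf10 : f (1, 0, 0) < 1 := by
    by_contra h
    push_neg at h
    have := hk2 1 0 zero_le_one le_rfl (Or.inr h)
    linarith
  set c₀ : ℝ := (f (1, 0, 0) + 1) / 2 with hc₀def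
  have hc₀lt : c₀ < 1 := by rw [hc₀def]; linarith
  have hmem1 : ((1:ℝ), (0:ℝ), (0:ℝ)) ∈ A := ⟨zero_le_one, le_rfl, le_rfl⟩
  have hcw1 := hf1 _ hmem1
  rw [Metric.continuousWithinAt_iff] at hcw1
  obtain ⟨δ, hδpos, hδ⟩ := hcw1 ((1 - f (1, 0, 0)) / 2) (by linarith)
  have hball : ∀ s : ℝ, 0 ≤ s → s < δ → f (1, s, 0) ≤ c₀ := by
    intro s hs hsδ
    have hmem' : ((1:ℝ), s, (0:ℝ)) ∈ A := ⟨zero_le_one, hs, le_rfl⟩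
    have hdist : dist (((1:ℝ), s, (0:ℝ)) : ℝ × ℝ × ℝ) ((1:ℝ), (0:ℝ), (0:ℝ)) < δ := by
      apply lt_of_le_of_lt (b := s) _ hsδ
      rw [Prod.dist_eq, Prod.dist_eq]
      simp only [dist_self, Real.dist_eq, sub_zero, abs_of_nonneg hs]
      exact max_le hs (max_le le_rfl hs)
    have := hδ hmem' hdist
    rw [Real.dist_eq] at this
    have h2 := (abs_lt.mp this).2
    rw [hc₀def]; linarith
  set C : ℝ := max δ⁻¹ (1 - c₀)⁻¹ with hC
  have hbound : ∀ n, ‖u n - p‖ ≤ C * ε n := by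
    intro n
    set d := ‖u n - p‖ with hd
    by_cases hcase : d * δ ≤ ε n
    · have h1 : d ≤ δ⁻¹ * ε n := by
        rw [← mul_le_mul_iff_right₀ hδpos, ← mul_assoc, mul_inv_cancel₀ (ne_of_gt hδpos), one_mul]
        linarith
      calc d ≤ δ⁻¹ * ε n := h1
        _ ≤ C * ε n := mul_le_mul_of_nonneg_right (le_max_left _ _) (norm_nonneg _)
    · push_neg at hcase
      have hdpos : 0 < d := by
        by_contra h
        push_neg at h
        have : d = 0 := le_antisymm h (norm_nonneg _)
        rw [this, zero_mul] at hcase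
        exact absurd hcase (not_lt.mpr (norm_nonneg _))
      have hune : u n ≠ p := by
        intro h
        rw [hd, h, sub_self, norm_zero] at hdpos
        exact lt_irrefl _ hdpos
      have h1 : ‖S (u n) - p‖ ≤ f (d, ε n, 0) := by
        have h0 := hK (u n) p hune
        rw [hSp, sub_self, norm_zero] at h0
        exact h0
      have h2 : f (d, ε n, 0) ≤ d * f (1, ε n / d, 0) := by
        have := hf3 d⁻¹ (by positivity) d (ε n) 0 hdpos.le (norm_nonneg _) le_rfl
        rw [inv_mul_cancel₀ (ne_of_gt hdpos), mul_zero] at this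
        have h3 : d * (d⁻¹ * f (d, ε n, 0)) ≤ d * f (1, d⁻¹ * ε n, 0) :=
          mul_le_mul_of_nonneg_left this hdpos.le
        rw [← mul_assoc, mul_inv_cancel₀ (ne_of_gt hdpos), one_mul] at h3
        rwa [div_eq_inv_mul]
      have h3 : f (1, ε n / d, 0) ≤ c₀ := by
        apply hball
        · positivity
        · rw [div_lt_iff₀ hdpos]
          linarith [hcase]
      have h4 : d ≤ ε n + d * c₀ := by
        have ht : d ≤ ε n + ‖S (u n) - p‖ :=
          norm_sub_le_norm_sub_add_norm_sub _ _ _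
        have : d * f (1, ε n / d, 0) ≤ d * c₀ := mul_le_mul_of_nonneg_left h3 hdpos.le
        linarith
      have h5 : d ≤ (1 - c₀)⁻¹ * ε n := by
        have hpos : (0:ℝ) < 1 - c₀ := by linarith
        rw [← mul_le_mul_iff_right₀ hpos, ← mul_assoc, mul_inv_cancel₀ (ne_of_gt hpos), one_mul]
        nlinarith
      calc d ≤ (1 - c₀)⁻¹ * ε n := h5
        _ ≤ C * ε n := mul_le_mul_of_nonneg_right (le_max_right _ _) (norm_nonneg _)
  have hfinal : Filter.Tendsto (fun n => ‖u n - p‖) Filter.atTop (nhds 0) := by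
    apply squeeze_zero (fun n => norm_nonneg _) hbound
    simpa using hεt.const_mul C
  apply hfinal.congr
  intro n
  rw [hiter n, norm_sub_rev]
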